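/- Parity of R-matrix entries: for nonnegative half-integers a, b let i(a) = 1 if 2a is odd and i(a) = 0 otherwise. For half-integers u, v with |u| ≤ a, |v| ≤ b, u−a, v−b ∈ ℤ and an integer n ≥ 0 with |u+n| ≤ a, |v−n| ≤ b, the R-matrix entry [n]!(q−q^{−1})^n · [a−u choose n] · [a+u+n choose n] · q^{2uv−n(u−v)−n(n+1)/2} lies in q^{ε/2} · ℤ[q, q^{−1}], where ε ∈ {0,1} satisfies ε ≡ n·(i(a)+i(b)) + i(a)·i(b) (mod 2). In other words, the parity of the powers of q^{1/2} occurring in this entry depends only on n, i(a) and i(b). -/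

import Mathlib

noncomputable section
open scoped Classical

namespace QSpin

/-- The ambient field: rational functions over `ℂ` (which contains `ℚ(i)`),
in a variable `X` which represents the formal fourth root `q^(1/4)`. -/
abbrev K : Type := RatFunc ℂ

/-- `X` represents `q^(1/4)`. -/
def X : K := RatFunc.X

/-- The quantum variable `q = X^4`. -/
def q : K := X ^ 4

/-- `i = √-1`, as a constant of `K`. -/
def ii : K := RatFunc.C Complex.I

/-- `q` raised to a rational power `r` (meaningful whenever `4 * r ∈ ℤ`). -/
def qpow (r : ℚ) : K := X ^ (4 * r).num

/-- Half of an integer, as a rational number: a half-integer is encoded by its double. -/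
def hf (n : ℤ) : ℚ := (n : ℚ) / 2

/-- Integer powers of `i`. -/
def ipow (n : ℤ) : K := ii ^ n

/-- Integer powers of `-1`. -/
def m1pow (n : ℤ) : K := (-1 : K) ^ n

/-- The quantum integer `[n] = (q^n - q^(-n))/(q - q⁻¹)`. -/
def qint (n : ℤ) : K := (q ^ n - q ^ (-n)) / (q - q⁻¹)

/-- The quantum factorial `[n]!`. -/
def qfact (n : ℕ) : K := ∏ j ∈ Finset.range n, qint (j + 1)

/-- The quantum factorial of an integer (zero for negative arguments). -/
def qfactz (n : ℤ) : K := if 0 ≤ n then qfact n.toNat else 0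

/-- The quantum binomial `[n choose k]`, vanishing unless `0 ≤ k ≤ n`. -/
def qbin (n k : ℤ) : K :=
  if 0 ≤ k ∧ k ≤ n then qfactz n / (qfactz k * qfactz (n - k)) else 0

/-- Admissibility of a triple of half-integers (encoded by their doubles):
all nonnegative, total sum an integer (i.e. the sum of the doubles is even), and
the triangular inequalities hold. -/
def Adm (a b c : ℤ) : Prop :=
  0 ≤ a ∧ 0 ≤ b ∧ 0 ≤ c ∧ 2 ∣ (a + b + c) ∧ c ≤ a + b ∧ a ≤ b + c ∧ b ≤ c + a

/-- The quantum Clebsch-Gordan coefficient `C^{a,b,c}_{u,v,t}`; all six half-integer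
parameters are encoded by their doubles. -/
def CG (a b c u v t : ℤ) : K :=
  if u + v = t then
    ipow ((c - a - b) / 2) * m1pow ((b - v) / 2 - (c - t) / 2) *
      qpow ((hf b - hf v) * (hf b + hf v + 1) / 2 - (hf a - hf u) * (hf a + hf u + 1) / 2) *
      (qfactz ((a + b - c) / 2) * qfactz ((b + c - a) / 2) * qfactz ((c + a - b) / 2) /
        qfactz c) *
      ∑ z ∈ Finset.range (((c - t) / 2).toNat + 1),
        m1pow z *
          qpow (((z : ℚ) - (((c - t) / 2 - (z : ℤ) : ℤ) : ℚ)) * (hf c + hf t + 1) / 2) *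
          qbin ((a + u) / 2 + z) ((a + c - b) / 2) *
          qbin ((b + v) / 2 + ((c - t) / 2 - (z : ℤ))) ((b + c - a) / 2) *
          qbin ((c - t) / 2) z
  else 0

/-- The coefficient `W^{a,b,c}_{u,v,t} = C^{a,b,c}_{u,v,-t} · i^{-2t} q^{-t} · [2c]!`. -/
def W (a b c u v t : ℤ) : K := CG a b c u v (-t) * ipow (-t) * qpow (-(hf t)) * qfactz c

/-- The coefficient `P^{a,b,c}_{u,v,t} = C^{a,c,b}_{-u,t,v} · i^{2u} q^{u} / [2a]!`. -/
def Pc (a b c u v t : ℤ) : K := CG a c b (-u) t v * ipow u * qpow (hf u) / qfactz a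

/-- The coefficient `M^{a,b,c}_{u,v,t} = P^{a,b,c}_{u,v,-t} · i^{-2t} q^{-t} / [2c]!`. -/
def M (a b c u v t : ℤ) : K := Pc a b c u v (-t) * ipow (-t) * qpow (-(hf t)) / qfactz c


/-- `i(a) = 1` if `2a` is odd and `0` otherwise; the half-integer `a` is encoded by its
double, so `2a` odd means the double is odd. -/
def halfparity (a : ℤ) : ℤ := if Odd a then 1 else 0

lemma X_ne : (X : K) ≠ 0 := RatFunc.X_ne_zero
lemma q_ne : (q : K) ≠ 0 := pow_ne_zero _ X_ne

lemma Xpow_ne_one (m : ℕ) (h : m ≠ 0) : (X : K) ^ m ≠ 1 := by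
  intro he
  have h1 : (algebraMap (Polynomial ℂ) (RatFunc ℂ)) (Polynomial.X ^ m) =
      (algebraMap (Polynomial ℂ) (RatFunc ℂ)) 1 := by
    simpa [X, map_pow] using he
  have := RatFunc.algebraMap_injective ℂ h1
  apply_fun Polynomial.natDegree at this
  simp [Polynomial.natDegree_X_pow] at this
  exact h this

lemma qzpow_ne_one (z : ℤ) (h : 0 < z) : q ^ z ≠ 1 := by
  have hz : z = (z.toNat : ℤ) := (Int.toNat_of_nonneg h.le).symm
  rw [hz, zpow_natCast]
  have : q ^ z.toNat = X ^ (4 * z.toNat) := by rw [q, ← pow_mul]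
  rw [this]
  exact Xpow_ne_one _ (by omega)

lemma qq_ne : (q - q⁻¹ : K) ≠ 0 := by
  rw [sub_ne_zero]
  intro h
  have h2 : q * q = 1 := by nth_rewrite 2 [h]; exact mul_inv_cancel₀ q_ne
  have : (X : K) ^ 8 = 1 := by
    have : q * q = X ^ 8 := by rw [q, ← pow_add]
    rw [← this, h2]
  exact Xpow_ne_one 8 (by norm_num) this

lemma qsub_ne (z : ℤ) (h : 0 < z) : q ^ z - q ^ (-z) ≠ 0 := by
  rw [sub_ne_zero]
  intro he
  have : q ^ (z + z) = 1 := by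
    rw [zpow_add₀ q_ne]
    nth_rewrite 2 [he]
    rw [← zpow_add₀ q_ne, add_neg_cancel, zpow_zero]
  exact qzpow_ne_one (z + z) (by omega) this

lemma qint_ne (z : ℤ) (h : 0 < z) : qint z ≠ 0 :=
  div_ne_zero (qsub_ne z h) qq_ne

lemma qfact_ne (n : ℕ) : qfact n ≠ 0 := by
  rw [qfact]
  exact Finset.prod_ne_zero_iff.mpr fun j _ => qint_ne _ (by positivity)

lemma qfactz_ne (z : ℤ) (h : 0 ≤ z) : qfactz z ≠ 0 := by
  rw [qfactz, if_pos h]; exact qfact_ne _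

lemma qfactz_natCast (n : ℕ) : qfactz (n : ℤ) = qfact n := by
  rw [qfactz, if_pos (by positivity)]; simp

lemma qfactz_zero : qfactz 0 = 1 := by
  rw [qfactz, if_pos le_rfl]; simp [qfact]

lemma qfactz_succ (m : ℤ) (h : 0 ≤ m) : qfactz (m + 1) = qfactz m * qint (m + 1) := by
  rw [qfactz, qfactz, if_pos (by omega), if_pos h]
  have ht : (m + 1).toNat = m.toNat + 1 := by omega
  rw [ht, qfact, qfact, Finset.prod_range_succ]
  congr 2
  rw [Int.toNat_of_nonneg h]

lemma qint_id (M k : ℤ) : qint M = q ^ k * qint (M - k) + q ^ (k - M) * qint k := by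
  rw [qint, qint, qint, ← mul_div_assoc, ← mul_div_assoc, ← add_div]
  congr 1
  rw [mul_sub, mul_sub, ← zpow_add₀ q_ne, ← zpow_add₀ q_ne, ← zpow_add₀ q_ne,
    ← zpow_add₀ q_ne, show k + (M - k) = M by ring, show k + -(M - k) = k - M + k by ring,
    show k - M + -k = -M by ring]
  ring

lemma qfactz_prod (A : ℤ) : ∀ n : ℕ, (n : ℤ) ≤ A →
    qfactz A = qfactz (A - n) * ∏ i ∈ Finset.range n, qint (A - i) := by
  intro n
  induction n with
  | zero => intro _; simp
  | succ n ih =>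
    intro h
    have h' : (n : ℤ) ≤ A := by push_cast at h; omega
    have h2 : 0 ≤ A - ((n : ℤ) + 1) := by push_cast at h; omega
    have step : qfactz (A - (n : ℤ)) = qfactz (A - ((n : ℤ) + 1)) * qint (A - n) := by
      have hs := qfactz_succ (A - ((n : ℤ) + 1)) h2
      rw [show A - ((n : ℤ) + 1) + 1 = A - n by ring] at hs
      exact hs
    rw [ih h', Finset.prod_range_succ, step,
      show A - (((n + 1) : ℕ) : ℤ) = A - ((n : ℤ) + 1) by push_cast; ring]
    ring

lemma key_prod (A : ℤ) (n : ℕ) (h : (n : ℤ) ≤ A) :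
    qfact n * (q - q⁻¹) ^ n * qbin A n =
      ∏ i ∈ Finset.range n, (q ^ (A - i) - q ^ (-(A - i))) := by
  have h0 : (0 : ℤ) ≤ n := by positivity
  rw [qbin, if_pos ⟨h0, h⟩, qfactz_natCast, qfactz_prod A n h]
  rw [show ∏ i ∈ Finset.range n, (q ^ (A - (i : ℤ)) - q ^ (-(A - (i : ℤ))))
      = ∏ i ∈ Finset.range n, (qint (A - i) * (q - q⁻¹)) from
    Finset.prod_congr rfl (fun i _ => by rw [qint, div_mul_cancel₀ _ qq_ne]),
    Finset.prod_mul_distrib, Finset.prod_const, Finset.card_range]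
  have hf1 := qfact_ne n
  have hf2 := qfactz_ne (A - n) (by omega)
  field_simp

lemma qbin_zero (M : ℤ) (h : 0 ≤ M) : qbin M 0 = 1 := by
  rw [qbin, if_pos ⟨le_rfl, h⟩, qfactz_zero, sub_zero, one_mul,
    div_self (qfactz_ne M h)]

lemma qbin_self (M : ℤ) (h : 0 ≤ M) : qbin M M = 1 := by
  rw [qbin, if_pos ⟨h, le_rfl⟩, sub_self, qfactz_zero, mul_one,
    div_self (qfactz_ne M h)]

lemma qbin_pascal (m : ℕ) (k : ℤ) (hk1 : 1 ≤ k) (hkm : k ≤ (m : ℤ)) :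
    qbin ((m : ℤ) + 1) k = q ^ k * qbin m k + q ^ (k - ((m : ℤ) + 1)) * qbin m (k - 1) := by
  have h0 : (0:ℤ) ≤ k := by omega
  rw [qbin, qbin, qbin, if_pos ⟨h0, by omega⟩, if_pos ⟨h0, hkm⟩, if_pos ⟨by omega, by omega⟩]
  have e1 : qfactz ((m : ℤ) + 1) = qfactz m * qint ((m : ℤ) + 1) :=
    qfactz_succ _ (by positivity)
  have e2 : qfactz ((m : ℤ) + 1 - k) = qfactz ((m : ℤ) - k) * qint ((m : ℤ) + 1 - k) := by
    have hs := qfactz_succ ((m : ℤ) - k) (by omega)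
    rw [show (m : ℤ) - k + 1 = (m : ℤ) + 1 - k by ring] at hs
    exact hs
  have e3 : qfactz k = qfactz (k - 1) * qint k := by
    have hs := qfactz_succ (k - 1) (by omega)
    rw [show k - 1 + 1 = k by ring] at hs
    exact hs
  have e4 : (m : ℤ) - (k - 1) = (m : ℤ) + 1 - k := by ring
  rw [e1, e2, e3, e4, e2, qint_id ((m : ℤ) + 1) k,
    show (m : ℤ) + 1 - k = (m : ℤ) + 1 - k by ring]
  have n1 : qfactz (m : ℤ) ≠ 0 := qfactz_ne _ (by positivity)
  have n2 : qfactz (k - 1) ≠ 0 := qfactz_ne _ (by omega)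
  have n3 : qfactz ((m : ℤ) - k) ≠ 0 := qfactz_ne _ (by omega)
  have n4 : qint k ≠ 0 := qint_ne _ (by omega)
  have n5 : qint ((m : ℤ) + 1 - k) ≠ 0 := qint_ne _ (by omega)
  field_simp

lemma zpow_q_mem (z : ℤ) : q ^ z ∈ Subring.closure ({q, q⁻¹} : Set K) := by
  have hq : q ∈ Subring.closure ({q, q⁻¹} : Set K) :=
    Subring.subset_closure (by simp)
  have hqi : q⁻¹ ∈ Subring.closure ({q, q⁻¹} : Set K) :=
    Subring.subset_closure (by simp)
  obtain ⟨m, rfl | rfl⟩ := Int.eq_nat_or_neg z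
  · rw [zpow_natCast]; exact pow_mem hq m
  · rw [zpow_neg, zpow_natCast, ← inv_pow]; exact pow_mem hqi m

lemma qsub_mem (z : ℤ) : q ^ z - q ^ (-z) ∈ Subring.closure ({q, q⁻¹} : Set K) :=
  sub_mem (zpow_q_mem z) (zpow_q_mem (-z))

lemma qbin_mem_nat : ∀ (m : ℕ) (k : ℤ), qbin (m : ℤ) k ∈ Subring.closure ({q, q⁻¹} : Set K) := by
  intro m
  induction m with
  | zero =>
    intro k
    by_cases hk : k = 0
    · rw [hk, Nat.cast_zero, qbin_zero 0 le_rfl]; exact one_mem _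
    · rw [qbin, if_neg (by push_cast; omega)]; exact zero_mem _
  | succ m ih =>
    intro k
    by_cases h : 0 ≤ k ∧ k ≤ ((m : ℤ) + 1)
    · by_cases hk0 : k = 0
      · rw [hk0, qbin_zero _ (by positivity)]; exact one_mem _
      · by_cases hkm : k = (m : ℤ) + 1
        · rw [hkm, show ((m + 1 : ℕ) : ℤ) = (m : ℤ) + 1 by push_cast; ring,
            qbin_self _ (by positivity)]
          exact one_mem _
        · rw [show ((m + 1 : ℕ) : ℤ) = (m : ℤ) + 1 by push_cast; ring,
            qbin_pascal m k (by omega) (by omega)]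
          exact add_mem (mul_mem (zpow_q_mem k) (ih k))
            (mul_mem (zpow_q_mem _) (ih (k - 1)))
    · rw [qbin, if_neg (by push_cast at h ⊢; omega)]; exact zero_mem _

lemma qbin_mem (M k : ℤ) : qbin M k ∈ Subring.closure ({q, q⁻¹} : Set K) := by
  rcases le_or_gt 0 M with hM | hM
  · have := qbin_mem_nat M.toNat k
    rwa [Int.toNat_of_nonneg hM] at this
  · rw [qbin, if_neg (by omega)]; exact zero_mem _

lemma halfparity_cast (x : ℤ) : ((halfparity x : ℤ) : ZMod 2) = (x : ZMod 2) := by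
  rw [halfparity]
  split_ifs with h
  · obtain ⟨c, rfl⟩ := h
    push_cast
    rw [show ((2 : ZMod 2)) = 0 from rfl]
    ring
  · obtain ⟨c, rfl⟩ := Int.not_odd_iff_even.mp h
    push_cast
    rw [show ((c : ZMod 2) + c) = 2 * c by ring, show ((2 : ZMod 2)) = 0 from rfl]
    ring

/-- Parity of `R`-matrix entries: the entry
`[n]!(q−q^{−1})^n [a−u choose n][a+u+n choose n] q^{2uv−n(u−v)−n(n+1)/2}`
lies in `q^{ε/2} · ℤ[q, q^{−1}]` for some `ε ∈ {0,1}` with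
`ε ≡ n(i(a)+i(b)) + i(a)i(b) (mod 2)`.
(Half-integers are encoded by their doubles; `X = q^{1/4}`, so `q^{ε/2} = X^{2ε}`.) -/
theorem Rmatrix_entry_parity (a b u v : ℤ) (ha : 0 ≤ a) (hb : 0 ≤ b)
    (hu : |u| ≤ a) (hv : |v| ≤ b) (h1 : 2 ∣ (a - u)) (h2 : 2 ∣ (b - v))
    (n : ℕ) (hn1 : |u + 2 * (n : ℤ)| ≤ a) (hn2 : |v - 2 * (n : ℤ)| ≤ b) :
    ∃ ε : ℕ, ε ≤ 1 ∧
      (ε : ℤ) ≡ (n : ℤ) * (halfparity a + halfparity b) + halfparity a * halfparity b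
        [ZMOD 2] ∧
      ∃ P ∈ Subring.closure ({q, q⁻¹} : Set K),
        qfact n * (q - q⁻¹) ^ n * qbin ((a - u) / 2) n * qbin ((a + u) / 2 + n) n *
            qpow (2 * hf u * hf v - (n : ℚ) * (hf u - hf v)
              - (n : ℚ) * ((n : ℚ) + 1) / 2)
          = X ^ (2 * ε) * P := by
  set t : ℤ := u * v - (n : ℤ) * (u - v) - (n : ℤ) * ((n : ℤ) + 1) with ht
  set ε : ℕ := if Even t then 0 else 1 with hε
  have hεt : ((ε : ℤ) : ZMod 2) = (t : ZMod 2) := by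
    rw [hε]
    split_ifs with h
    · obtain ⟨c, hc⟩ := h
      rw [hc]
      push_cast
      rw [show ((c : ZMod 2) + c) = 2 * c by ring, show ((2 : ZMod 2)) = 0 from rfl]
      ring
    · obtain ⟨c, hc⟩ := Int.not_even_iff_odd.mp h
      rw [hc]
      push_cast
      rw [show ((2 : ZMod 2)) = 0 from rfl]
      ring
  refine ⟨ε, by rw [hε]; split_ifs <;> norm_num, ?_, ?_⟩
  · -- modular condition
    apply (ZMod.intCast_eq_intCast_iff _ _ 2).mp
    rw [hεt]
    have hu2 : ((u : ZMod 2)) = (a : ZMod 2) := by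
      have : ((a - u : ℤ) : ZMod 2) = 0 :=
        (ZMod.intCast_zmod_eq_zero_iff_dvd _ _).mpr (by exact_mod_cast h1)
      push_cast at this
      linear_combination -this
    have hv2 : ((v : ZMod 2)) = (b : ZMod 2) := by
      have : ((b - v : ℤ) : ZMod 2) = 0 :=
        (ZMod.intCast_zmod_eq_zero_iff_dvd _ _).mpr (by exact_mod_cast h2)
      push_cast at this
      linear_combination -this
    have key : ∀ A B N : ZMod 2, A * B - N * (A - B) - N * (N + 1)
        = N * (A + B) + A * B := by decide
    rw [ht]
    push_cast
    rw [hu2, hv2, halfparity_cast, halfparity_cast]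
    exact key _ _ _
  · -- main identity
    obtain ⟨j, hj⟩ : ∃ j : ℤ, t = (ε : ℤ) + 2 * j := by
      rcases Int.even_or_odd t with ⟨c, hc⟩ | ⟨c, hc⟩
      · refine ⟨c, ?_⟩
        rw [hε, if_pos ⟨c, hc⟩]
        push_cast
        omega
      · refine ⟨c, ?_⟩
        rw [hε, if_neg (Int.not_even_iff_odd.mpr ⟨c, hc⟩)]
        push_cast
        omega
    set A : ℤ := (a - u) / 2 with hA
    set B : ℤ := (a + u) / 2 + n with hB
    have habs1 : u + 2 * (n : ℤ) ≤ a := (abs_le.mp hn1).2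
    have habs2 : -a ≤ u := (abs_le.mp hu).1
    have hAn : (n : ℤ) ≤ A := by
      rw [hA]
      rw [Int.le_ediv_iff_mul_le (by norm_num)]
      omega
    have hBn : (n : ℤ) ≤ B := by
      rw [hB]
      have : 0 ≤ (a + u) / 2 := Int.ediv_nonneg (by omega) (by norm_num)
      omega
    have hqpow : qpow (2 * hf u * hf v - (n : ℚ) * (hf u - hf v)
        - (n : ℚ) * ((n : ℚ) + 1) / 2) = X ^ ((2 * t : ℤ)) := by
      rw [qpow]
      congr 1
      have : (4 : ℚ) * (2 * hf u * hf v - (n : ℚ) * (hf u - hf v)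
          - (n : ℚ) * ((n : ℚ) + 1) / 2) = ((2 * t : ℤ) : ℚ) := by
        rw [ht, hf, hf]
        push_cast
        ring
      rw [this, Rat.num_intCast]
    have hXsplit : (X : K) ^ ((2 * t : ℤ)) = X ^ (2 * ε) * q ^ j := by
      have hq4 : (q : K) ^ j = X ^ ((4 * j : ℤ)) := by
        rw [q, ← zpow_natCast (X : K) 4, ← zpow_mul]
        norm_num
      rw [hq4, ← zpow_natCast (X : K) (2 * ε), ← zpow_add₀ X_ne]
      congr 1
      push_cast
      omega
    refine ⟨(∏ i ∈ Finset.range n, (q ^ (A - i) - q ^ (-(A - i)))) * qbin B n * q ^ j,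
      mul_mem (mul_mem (prod_mem fun i _ => qsub_mem _) (qbin_mem B n)) (zpow_q_mem j), ?_⟩
    rw [key_prod A n hAn, hqpow, hXsplit]
    ring


end QSpin
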